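/- Let H ∈ (1/2, 1), T₁ > 0, and let h : [0, T₁] → ℝ be twice continuously differentiable. Then the function t ↦ t^{H−1/2} ∫_0^t (t^{1/2−H} h'(t) − s^{1/2−H} h'(s)) (t − s)^{−(H+1/2)} ds belongs to L²([0, T₁]), and its L²([0, T₁])-norm is bounded by a constant depending only on H, T₁ and C²(h), where C²(h) = sup_{[0,T₁]} |h| + sup_{[0,T₁]} |h'| + sup_{[0,T₁]} |h''|. -/

import Mathlib

open MeasureTheory intervalIntegral Set

lemma rpow_integrableOn_Ioc {r : ℝ} (hr : -1 < r) (a b : ℝ) :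
    IntegrableOn (fun x : ℝ => x ^ r) (Ioc a b) := by
  have := (intervalIntegrable_rpow' (a := a) (b := b) hr)
  rcases le_total a b with hab | hab
  · exact (intervalIntegrable_iff_integrableOn_Ioc_of_le hab).mp this
  · rw [Ioc_eq_empty (by exact not_lt.mpr hab)]; exact integrableOn_empty

lemma rpow_sub_integrableOn {q t : ℝ} (hq : -1 < q) (ht : 0 < t) :
    IntegrableOn (fun s : ℝ => (t - s) ^ q) (Ioc (t/2) t) := by
  have h1 : IntegrableOn (fun x : ℝ => x ^ q) (Ioc 0 (t/2)) := rpow_integrableOn_Ioc hq 0 (t/2)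
  have h2 : MeasurePreserving (fun x : ℝ => t - x) volume volume :=
    (Measure.measurePreserving_sub_left volume t)
  have h3 := (MeasurePreserving.integrableOn_comp_preimage h2
    (MeasurableEquiv.subLeft t).measurableEmbedding (s := Ioc 0 (t/2))
    (f := fun x : ℝ => x ^ q)).mpr h1
  have : (fun x : ℝ => t - x) ⁻¹' Ioc 0 (t/2) = Ico (t/2) t := by
    ext x; simp only [mem_preimage, mem_Ioc, mem_Ico]; constructor <;> intro hh <;>
      constructor <;> linarith [hh.1, hh.2]
  rw [this] at h3
  exact (integrableOn_Ioc_iff_integrableOn_Ioo).mpr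
    ((integrableOn_Ico_iff_integrableOn_Ioo).mp h3)

lemma beta_piece1 {p q t : ℝ} (hp : -1 < p) (hq0 : q ≤ 0) (ht : 0 < t) :
    IntegrableOn (fun s : ℝ => s ^ p * (t - s) ^ q) (Ioc 0 (t / 2)) := by
  have ht2 : 0 < t / 2 := by linarith
  have hmeas : Measurable fun s : ℝ => s ^ p * (t - s) ^ q := by fun_prop
  refine Integrable.mono' (g := fun s : ℝ => (t / 2) ^ q * s ^ p)
    (((rpow_integrableOn_Ioc hp 0 (t/2))).const_mul _) hmeas.aestronglyMeasurable ?_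
  rw [ae_restrict_iff' measurableSet_Ioc]
  refine ae_of_all _ fun s hs => ?_
  have hs0 : 0 < s := hs.1
  have hts : t / 2 ≤ t - s := by have := hs.2; linarith
  have h1 : (t - s) ^ q ≤ (t / 2) ^ q := Real.rpow_le_rpow_of_nonpos ht2 hts hq0
  have h2 : (0:ℝ) ≤ s ^ p := Real.rpow_nonneg hs0.le _
  rw [Real.norm_eq_abs, abs_of_nonneg (mul_nonneg h2 (Real.rpow_nonneg (by linarith [hs.2] : (0:ℝ) ≤ t - s) _))]
  calc s ^ p * (t - s) ^ q ≤ s ^ p * (t/2) ^ q := by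
        exact mul_le_mul_of_nonneg_left h1 h2
    _ = (t/2) ^ q * s ^ p := by ring

lemma beta_piece2 {p q t : ℝ} (hp0 : p ≤ 0) (hq : -1 < q) (ht : 0 < t) :
    IntegrableOn (fun s : ℝ => s ^ p * (t - s) ^ q) (Ioc (t / 2) t) := by
  have ht2 : 0 < t / 2 := by linarith
  have hmeas : Measurable fun s : ℝ => s ^ p * (t - s) ^ q := by fun_prop
  have hint : IntegrableOn (fun s : ℝ => (t - s) ^ q) (Ioc (t/2) t) :=
    rpow_sub_integrableOn hq ht
  refine Integrable.mono' (g := fun s : ℝ => (t / 2) ^ p * (t - s) ^ q)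
    (hint.const_mul _) hmeas.aestronglyMeasurable ?_
  rw [ae_restrict_iff' measurableSet_Ioc]
  refine ae_of_all _ fun s hs => ?_
  have hs0 : 0 < s := lt_trans ht2 hs.1
  have hts : 0 ≤ t - s := by linarith [hs.2]
  have h1 : s ^ p ≤ (t / 2) ^ p := Real.rpow_le_rpow_of_nonpos ht2 hs.1.le hp0
  have h2 : (0:ℝ) ≤ (t - s) ^ q := Real.rpow_nonneg hts _
  rw [Real.norm_eq_abs, abs_of_nonneg (mul_nonneg (Real.rpow_nonneg hs0.le _) h2)]
  exact mul_le_mul_of_nonneg_right h1 h2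

lemma beta_integrable {p q t : ℝ} (hp : -1 < p) (hp0 : p ≤ 0) (hq : -1 < q) (hq0 : q ≤ 0)
    (ht : 0 < t) : IntegrableOn (fun s : ℝ => s ^ p * (t - s) ^ q) (Ioc 0 t) := by
  have : Ioc (0:ℝ) t = Ioc 0 (t/2) ∪ Ioc (t/2) t := by
    rw [Ioc_union_Ioc_eq_Ioc (by linarith) (by linarith)]
  rw [this]
  exact (beta_piece1 hp hq0 ht).union (beta_piece2 hp0 hq ht)

lemma beta_bound {p q t : ℝ} (hp : -1 < p) (hp0 : p ≤ 0) (hq : -1 < q) (hq0 : q ≤ 0)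
    (ht : 0 < t) :
    ∫ s in Ioc 0 t, s ^ p * (t - s) ^ q ≤ (2 / (p + 1) + 2 / (q + 1)) * t ^ (p + q + 1) := by
  have ht2 : 0 < t / 2 := by linarith
  have hp1 : 0 < p + 1 := by linarith
  have hq1 : 0 < q + 1 := by linarith
  have hsplit : Ioc (0:ℝ) t = Ioc 0 (t/2) ∪ Ioc (t/2) t := by
    rw [Ioc_union_Ioc_eq_Ioc (by linarith) (by linarith)]
  have hdisj : Disjoint (Ioc (0:ℝ) (t/2)) (Ioc (t/2) t) := Ioc_disjoint_Ioc_of_le le_rfl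
  rw [hsplit, setIntegral_union hdisj measurableSet_Ioc (beta_piece1 hp hq0 ht)
    (beta_piece2 hp0 hq ht)]
  -- bound piece 1
  have key : ((t:ℝ)/2) ^ (p + q + 1) ≤ 2 * t ^ (p + q + 1) := by
    rw [Real.div_rpow ht.le (by norm_num : (0:ℝ) ≤ 2)]
    rw [div_le_iff₀ (Real.rpow_pos_of_pos two_pos _)]
    have h2 : (2:ℝ) ^ (-1:ℝ) ≤ (2:ℝ) ^ (p + q + 1) :=
      Real.rpow_le_rpow_of_exponent_le one_le_two (by linarith)
    have : (1:ℝ)/2 ≤ (2:ℝ) ^ (p+q+1) := by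
      rw [show ((1:ℝ)/2) = (2:ℝ)^(-1:ℝ) by rw [Real.rpow_neg_one]; norm_num]
      exact h2
    nlinarith [Real.rpow_nonneg ht.le (p+q+1), Real.rpow_pos_of_pos two_pos (p+q+1)]
  have prod_rpow : ∀ a b : ℝ, (t/2) ^ a * (t/2) ^ b = (t/2) ^ (a + b) :=
    fun a b => (Real.rpow_add ht2 a b).symm
  have hb1 : ∫ s in Ioc 0 (t/2), s ^ p * (t - s) ^ q ≤ 2 / (p + 1) * t ^ (p + q + 1) := by
    have step1 : ∫ s in Ioc 0 (t/2), s ^ p * (t - s) ^ q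
        ≤ ∫ s in Ioc 0 (t/2), (t/2) ^ q * s ^ p := by
      refine setIntegral_mono_on (beta_piece1 hp hq0 ht)
        ((rpow_integrableOn_Ioc hp 0 (t/2)).const_mul _) measurableSet_Ioc fun s hs => ?_
      have hs0 : 0 < s := hs.1
      have hts : t / 2 ≤ t - s := by have := hs.2; linarith
      calc s ^ p * (t - s) ^ q ≤ s ^ p * (t/2) ^ q :=
            mul_le_mul_of_nonneg_left (Real.rpow_le_rpow_of_nonpos ht2 hts hq0)
              (Real.rpow_nonneg hs0.le _)
        _ = (t/2) ^ q * s ^ p := by ring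
    have step2 : ∫ s in Ioc 0 (t/2), (t/2) ^ q * s ^ p
        = (t/2) ^ q * ((t/2) ^ (p+1) / (p+1)) := by
      rw [MeasureTheory.integral_const_mul]
      congr 1
      rw [← intervalIntegral.integral_of_le ht2.le, integral_rpow (Or.inl hp)]
      rw [Real.zero_rpow (by linarith)]
      ring
    have step3 : (t/2) ^ q * ((t/2) ^ (p+1) / (p+1)) = (t/2) ^ (p+q+1) / (p+1) := by
      rw [mul_div_assoc', prod_rpow]; ring_nf
    calc ∫ s in Ioc 0 (t/2), s ^ p * (t - s) ^ q
        ≤ (t/2) ^ (p+q+1) / (p+1) := step1.trans (le_of_eq (step2.trans step3))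
      _ ≤ 2 * t ^ (p+q+1) / (p+1) := by gcongr
      _ = 2 / (p+1) * t ^ (p+q+1) := by ring
  have hb2 : ∫ s in Ioc (t/2) t, s ^ p * (t - s) ^ q ≤ 2 / (q + 1) * t ^ (p + q + 1) := by
    have step1 : ∫ s in Ioc (t/2) t, s ^ p * (t - s) ^ q
        ≤ ∫ s in Ioc (t/2) t, (t/2) ^ p * (t - s) ^ q := by
      refine setIntegral_mono_on (beta_piece2 hp0 hq ht) ?_ measurableSet_Ioc fun s hs => ?_
      · exact (rpow_sub_integrableOn hq ht).const_mul _
      · have hts : 0 ≤ t - s := by linarith [hs.2]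
        exact mul_le_mul_of_nonneg_right
          (Real.rpow_le_rpow_of_nonpos ht2 hs.1.le hp0) (Real.rpow_nonneg hts _)
    have step2 : ∫ s in Ioc (t/2) t, (t/2) ^ p * (t - s) ^ q
        = (t/2) ^ p * ((t/2) ^ (q+1) / (q+1)) := by
      rw [MeasureTheory.integral_const_mul]
      congr 1
      rw [← intervalIntegral.integral_of_le (by linarith : t/2 ≤ t)]
      have := intervalIntegral.integral_comp_sub_left (a := t/2) (b := t)
        (fun x : ℝ => x ^ q) t
      rw [this]
      rw [show t - t = (0:ℝ) by ring, show t - t/2 = t/2 by ring]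
      rw [integral_rpow (Or.inl hq), Real.zero_rpow (by linarith)]
      ring
    have step3 : (t/2) ^ p * ((t/2) ^ (q+1) / (q+1)) = (t/2) ^ (p+q+1) / (q+1) := by
      rw [mul_div_assoc', prod_rpow]; ring_nf
    calc ∫ s in Ioc (t/2) t, s ^ p * (t - s) ^ q
        ≤ (t/2) ^ (p+q+1) / (q+1) := step1.trans (le_of_eq (step2.trans step3))
      _ ≤ 2 * t ^ (p+q+1) / (q+1) := by gcongr
      _ = 2 / (q+1) * t ^ (p+q+1) := by ring
  have := add_le_add hb1 hb2
  linarith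

section
variable {H T₁ M : ℝ}

lemma inner_abs_bound (hH₁ : 1 / 2 < H) (hH₂ : H < 1) (hT₁ : 0 < T₁)
    (h : ℝ → ℝ) (hh : ContDiff ℝ 2 h)
    (hb : ∀ s ∈ Icc (0:ℝ) T₁, |h s| + |deriv h s| + |deriv (deriv h) s| ≤ M)
    {t : ℝ} (ht : t ∈ Ioc (0:ℝ) T₁) :
    |∫ s in (0:ℝ)..t, (t ^ (1 / 2 - H) * deriv h t - s ^ (1 / 2 - H) * deriv h s)
        * (t - s) ^ (-(H + 1 / 2))|
      ≤ M * (4 / (1 - H) + 4 / (3/2 - H) * T₁) * t ^ (1 - 2 * H) := by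
  have ht0 : 0 < t := ht.1
  have htT : t ≤ T₁ := ht.2
  have hM0 : 0 ≤ M :=
    le_trans (by positivity) (hb 0 ⟨le_refl 0, hT₁.le⟩)
  have hd1 : ∀ s ∈ Icc (0:ℝ) T₁, |deriv h s| ≤ M := fun s hs => by
    have := hb s hs; have h1 := abs_nonneg (h s); have h2 := abs_nonneg (deriv (deriv h) s)
    linarith
  have hd2 : ∀ s ∈ Icc (0:ℝ) T₁, |deriv (deriv h) s| ≤ M := fun s hs => by
    have := hb s hs; have h1 := abs_nonneg (h s); have h2 := abs_nonneg (deriv h s)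
    linarith
  have h2' : ContDiff ℝ 1 (deriv h) := by
    rw [show (2 : WithTop ℕ∞) = 1 + 1 from rfl, contDiff_succ_iff_deriv] at hh
    exact hh.2.2
  have hdiff : Differentiable ℝ (deriv h) := h2'.differentiable one_ne_zero
  have hc' : Continuous (deriv h) := h2'.continuous
  -- Lipschitz bound for deriv h on [0, T₁]
  have hlip : ∀ s, 0 ≤ s → s ≤ t → |deriv h t - deriv h s| ≤ M * (t - s) := by
    intro s hs0 hst
    have := norm_image_sub_le_of_norm_deriv_le_segment'
      (f := deriv h) (f' := deriv (deriv h)) (a := s) (b := t)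
      (fun x _ => ((hdiff x).hasDerivAt).hasDerivWithinAt)
      (fun x hx => hd2 x ⟨le_trans hs0 hx.1, le_trans hx.2.le htT⟩)
      t (right_mem_Icc.mpr hst)
    simpa [Real.norm_eq_abs] using this
  set a : ℝ := 1 / 2 - H with ha
  have ha0 : a ≤ 0 := by rw [ha]; linarith
  have haneg : a ≠ 0 := by rw [ha]; intro hcon; linarith [sub_eq_zero.mp hcon]
  -- MVT for rpow
  have hmvt : ∀ s, 0 < s → s ≤ t → s ^ a - t ^ a ≤ (H - 1/2) * s ^ (a - 1) * (t - s) := by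
    intro s hs0 hst
    have key := norm_image_sub_le_of_norm_deriv_le_segment'
      (f := fun x : ℝ => x ^ a) (f' := fun x : ℝ => a * x ^ (a - 1)) (a := s) (b := t)
      (C := (H - 1/2) * s ^ (a - 1))
      (fun x hx => (Real.hasDerivAt_rpow_const
        (Or.inl (ne_of_gt (lt_of_lt_of_le hs0 hx.1)))).hasDerivWithinAt)
      (fun x hx => ?_) t (right_mem_Icc.mpr hst)
    · calc s ^ a - t ^ a ≤ |t ^ a - s ^ a| := by
            rw [abs_sub_comm]; exact le_abs_self _
        _ ≤ (H - 1/2) * s ^ (a - 1) * (t - s) := by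
            simpa [Real.norm_eq_abs] using key
    · have hx0 : 0 < x := lt_of_lt_of_le hs0 hx.1
      rw [Real.norm_eq_abs, abs_mul, abs_of_nonneg (Real.rpow_nonneg hx0.le _)]
      have e1 : |a| = H - 1/2 := by rw [ha, abs_of_nonpos (by linarith)]; ring
      rw [e1]
      exact mul_le_mul_of_nonneg_left
        (Real.rpow_le_rpow_of_nonpos hs0 hx.1 (by linarith)) (by linarith)
  -- pointwise bound for the integrand
  set g : ℝ → ℝ := fun s => (t ^ a * deriv h t - s ^ a * deriv h s) * (t - s) ^ (-(H + 1/2))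
    with hg
  set B : ℝ → ℝ := fun s => M * (s ^ (-H) * (t - s) ^ (-H)) + M * (s ^ a * (t - s) ^ a)
    with hB
  have key : ∀ s ∈ Ioc (0:ℝ) t, |g s| ≤ B s := by
    intro s hs
    rcases eq_or_lt_of_le hs.2 with heq | hlt
    · subst heq
      simp only [hg, hB, sub_self, Real.zero_rpow haneg,
        Real.zero_rpow (show -(H + 1/2) ≠ 0 by intro hc; nlinarith [neg_eq_zero.mp hc]),
        Real.zero_rpow (show -H ≠ 0 by intro hc; nlinarith [neg_eq_zero.mp hc]),
        mul_zero, zero_mul, abs_zero, add_zero, zero_add, le_refl]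
    · have hs0 : 0 < s := hs.1
      have hd : 0 < t - s := by linarith
      have hsa : (0:ℝ) ≤ s ^ a := Real.rpow_nonneg hs0.le _
      have hta : t ^ a ≤ s ^ a := Real.rpow_le_rpow_of_nonpos hs0 hs.2 ha0
      have hAbound : |t ^ a * deriv h t - s ^ a * deriv h s|
          ≤ M * (s ^ a - t ^ a) + s ^ a * (M * (t - s)) := by
        have expand : t ^ a * deriv h t - s ^ a * deriv h s
            = (t ^ a - s ^ a) * deriv h t + s ^ a * (deriv h t - deriv h s) := by ring
        rw [expand]
        refine (abs_add_le _ _).trans ?_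
        rw [abs_mul, abs_mul, abs_of_nonneg hsa]
        have e1 : |t ^ a - s ^ a| = s ^ a - t ^ a := by
          rw [abs_sub_comm, abs_of_nonneg (by linarith)]
        rw [e1]
        refine add_le_add ?_ ?_
        · calc (s ^ a - t ^ a) * |deriv h t| ≤ (s ^ a - t ^ a) * M :=
              mul_le_mul_of_nonneg_left (hd1 t ⟨ht0.le, htT⟩) (by linarith)
            _ = M * (s ^ a - t ^ a) := by ring
        · exact mul_le_mul_of_nonneg_left (hlip s hs0.le hs.2) hsa
      -- the square-root trick
      have hsqrt : s ^ a - t ^ a ≤ s ^ (-H) * (t - s) ^ (1/2 : ℝ) := by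
        set x := s ^ a - t ^ a with hx
        have hx0 : 0 ≤ x := by rw [hx]; linarith
        have hx1 : x ≤ s ^ a := by rw [hx]; linarith [Real.rpow_nonneg ht0.le a]
        have hx2 : x ≤ (H - 1/2) * s ^ (a - 1) * (t - s) := hmvt s hs0 hs.2
        have hxx : x * x ≤ (s ^ a * s ^ (a - 1)) * ((H - 1/2) * (t - s)) := by
          calc x * x ≤ (s ^ a) * ((H - 1/2) * s ^ (a - 1) * (t - s)) :=
                mul_le_mul hx1 hx2 hx0 hsa
            _ = (s ^ a * s ^ (a - 1)) * ((H - 1/2) * (t - s)) := by ring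
        have e2 : s ^ a * s ^ (a - 1) = s ^ ((-H) * 2) := by
          rw [← Real.rpow_add hs0]; congr 1; rw [ha]; ring
        have e3 : s ^ ((-H) * 2) = (s ^ (-H)) * (s ^ (-H)) := by
          rw [Real.rpow_mul hs0.le]
          rw [show ((2:ℝ) = (2:ℕ)) by norm_num, Real.rpow_natCast]
          ring
        calc x = Real.sqrt (x * x) := (Real.sqrt_mul_self hx0).symm
          _ ≤ Real.sqrt ((s ^ (-H) * s ^ (-H)) * ((H - 1/2) * (t - s))) := by
              apply Real.sqrt_le_sqrt; rw [← e3, ← e2]; exact hxx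
          _ = s ^ (-H) * Real.sqrt ((H - 1/2) * (t - s)) := by
              rw [Real.sqrt_mul (mul_self_nonneg _), Real.sqrt_mul_self
                (Real.rpow_nonneg hs0.le _)]
          _ ≤ s ^ (-H) * (Real.sqrt 1 * Real.sqrt (t - s)) := by
              rw [Real.sqrt_mul (by linarith)]
              refine mul_le_mul_of_nonneg_left (mul_le_mul_of_nonneg_right ?_
                (Real.sqrt_nonneg _)) (Real.rpow_nonneg hs0.le _)
              exact Real.sqrt_le_sqrt (by linarith)
          _ = s ^ (-H) * (t - s) ^ (1/2 : ℝ) := by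
              rw [Real.sqrt_one, one_mul, Real.rpow_def_of_pos hd, Real.sqrt_eq_rpow,
                Real.rpow_def_of_pos hd]
      have hE : (0:ℝ) ≤ (t - s) ^ (-(H + 1/2)) := Real.rpow_nonneg hd.le _
      calc |g s| = |t ^ a * deriv h t - s ^ a * deriv h s| * (t - s) ^ (-(H + 1/2)) := by
            rw [hg, abs_mul, abs_of_nonneg hE]
        _ ≤ (M * (s ^ (-H) * (t - s) ^ (1/2:ℝ)) + s ^ a * (M * (t - s)))
              * (t - s) ^ (-(H + 1/2)) := by
            refine mul_le_mul_of_nonneg_right (hAbound.trans (add_le_add ?_ le_rfl)) hE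
            exact mul_le_mul_of_nonneg_left hsqrt hM0
        _ = M * (s ^ (-H) * ((t - s) ^ (1/2:ℝ) * (t - s) ^ (-(H + 1/2))))
            + M * (s ^ a * ((t - s) ^ (1:ℝ) * (t - s) ^ (-(H + 1/2)))) := by
            rw [Real.rpow_one]; ring
        _ = B s := by
            have e4 : (t - s) ^ (1/2:ℝ) * (t - s) ^ (-(H + 1/2)) = (t - s) ^ (-H) := by
              rw [← Real.rpow_add hd, show (1/2 + -(H + 1/2) : ℝ) = -H by ring]
            have e5 : (t - s) ^ (1:ℝ) * (t - s) ^ (-(H + 1/2)) = (t - s) ^ a := by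
              rw [← Real.rpow_add hd, show (1 + -(H + 1/2) : ℝ) = a by rw [ha]; ring]
            rw [e4, e5]
  -- conclude via the beta integral bounds
  have hmH1 : (-1:ℝ) < -H := by linarith
  have hmH0 : (-H:ℝ) ≤ 0 := by linarith
  have hb1int : IntegrableOn (fun s : ℝ => s ^ (-H) * (t - s) ^ (-H)) (Ioc 0 t) :=
    beta_integrable hmH1 hmH0 hmH1 hmH0 ht0
  have haa : (-1:ℝ) < a := by rw [ha]; linarith
  have hb2int : IntegrableOn (fun s : ℝ => s ^ a * (t - s) ^ a) (Ioc 0 t) :=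
    beta_integrable haa ha0 haa ha0 ht0
  have hBint : IntegrableOn B (Ioc 0 t) := by
    rw [hB]; exact (hb1int.const_mul M).add (hb2int.const_mul M)
  have hgmeas : Measurable g := by
    have m1 : Measurable fun s : ℝ => s ^ a := by fun_prop
    have m2 : Measurable fun s : ℝ => (t - s) ^ (-(H + 1/2)) := by fun_prop
    exact (measurable_const.sub (m1.mul hc'.measurable)).mul m2
  have hgint : IntegrableOn g (Ioc 0 t) := by
    refine Integrable.mono' hBint hgmeas.aestronglyMeasurable ?_
    rw [ae_restrict_iff' measurableSet_Ioc]
    exact ae_of_all _ fun s hs => by rw [Real.norm_eq_abs]; exact key s hs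
  have habs2 : ∫ s in Ioc 0 t, |g s| ≤ ∫ s in Ioc 0 t, B s :=
    setIntegral_mono_on hgint.abs hBint measurableSet_Ioc key
  have hBval : ∫ s in Ioc 0 t, B s
      ≤ M * ((4/(1-H)) * t ^ (1-2*H)) + M * ((4/(3/2-H)) * t ^ (2-2*H)) := by
    have hint1 : ∫ s in Ioc 0 t, B s
        = M * (∫ s in Ioc 0 t, s ^ (-H) * (t - s) ^ (-H))
          + M * (∫ s in Ioc 0 t, s ^ a * (t - s) ^ a) := by
      rw [hB, integral_add (hb1int.const_mul M) (hb2int.const_mul M),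
        MeasureTheory.integral_const_mul, MeasureTheory.integral_const_mul]
    have b1 := beta_bound hmH1 hmH0 hmH1 hmH0 ht0
    rw [show (-H + -H + 1 : ℝ) = 1 - 2*H by ring,
      show (2/(-H+1) + 2/(-H+1) : ℝ) = 4/(1-H) by rw [show (-H+1:ℝ) = 1-H by ring]; ring] at b1
    have b2 := beta_bound haa ha0 haa ha0 ht0
    rw [show (a + a + 1 : ℝ) = 2 - 2*H by rw [ha]; ring,
      show (2/(a+1) + 2/(a+1) : ℝ) = 4/(3/2-H) by rw [show (a+1:ℝ) = 3/2-H by rw [ha]; ring]; ring]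
      at b2
    rw [hint1]
    exact add_le_add (mul_le_mul_of_nonneg_left b1 hM0) (mul_le_mul_of_nonneg_left b2 hM0)
  have ht2 : t ^ (2-2*H) ≤ T₁ * t ^ (1-2*H) := by
    rw [show (2-2*H:ℝ) = 1 + (1-2*H) by ring, Real.rpow_add ht0, Real.rpow_one]
    exact mul_le_mul_of_nonneg_right htT (Real.rpow_nonneg ht0.le _)
  have hc2 : (0:ℝ) ≤ 4/(3/2-H) := div_nonneg (by norm_num) (by linarith)
  calc |∫ s in (0:ℝ)..t, (t ^ a * deriv h t - s ^ a * deriv h s) * (t - s) ^ (-(H + 1/2))|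
      = |∫ s in Ioc 0 t, g s| := by rw [intervalIntegral.integral_of_le ht0.le]
    _ ≤ ∫ s in Ioc 0 t, |g s| := by
        simpa [Real.norm_eq_abs] using
          MeasureTheory.norm_integral_le_integral_norm (μ := volume.restrict (Ioc 0 t)) g
    _ ≤ ∫ s in Ioc 0 t, B s := habs2
    _ ≤ M * ((4/(1-H)) * t ^ (1-2*H)) + M * ((4/(3/2-H)) * t ^ (2-2*H)) := hBval
    _ ≤ M * (4 / (1 - H) + 4 / (3/2 - H) * T₁) * t ^ (1 - 2 * H) := by
        have step : M * ((4/(3/2-H)) * t ^ (2-2*H)) ≤ M * ((4/(3/2-H)) * (T₁ * t ^ (1-2*H))) :=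
          mul_le_mul_of_nonneg_left (mul_le_mul_of_nonneg_left ht2 hc2) hM0
        nlinarith [step]

end
theorem I2_L2_bound_single_path
    (H : ℝ) (hH₁ : 1 / 2 < H) (hH₂ : H < 1) (T₁ : ℝ) (hT₁ : 0 < T₁) (M : ℝ) :
    ∃ C : ℝ, ∀ h : ℝ → ℝ, ContDiff ℝ 2 h →
      (∀ s ∈ Icc (0:ℝ) T₁, |h s| + |deriv h s| + |deriv (deriv h) s| ≤ M) →
      IntegrableOn
          (fun t : ℝ => (t ^ (H - 1 / 2) *
            ∫ s in (0:ℝ)..t,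
              (t ^ (1 / 2 - H) * deriv h t - s ^ (1 / 2 - H) * deriv h s)
                * (t - s) ^ (-(H + 1 / 2))) ^ 2)
          (Icc 0 T₁)
      ∧ (∫ t in Icc (0:ℝ) T₁, (t ^ (H - 1 / 2) *
            ∫ s in (0:ℝ)..t,
              (t ^ (1 / 2 - H) * deriv h t - s ^ (1 / 2 - H) * deriv h s)
                * (t - s) ^ (-(H + 1 / 2))) ^ 2) ≤ C := by
  set K : ℝ := |M| * (4 / (1 - H) + 4 / (3/2 - H) * T₁) with hK
  have hK0 : 0 ≤ K := by
    rw [hK]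
    exact mul_nonneg (abs_nonneg M) (add_nonneg (div_nonneg (by norm_num) (by linarith))
      (mul_nonneg (div_nonneg (by norm_num) (by linarith)) hT₁.le))
  refine ⟨K ^ 2 * (T₁ ^ (2 - 2*H) / (2 - 2*H)), ?_⟩
  intro h hh hb
  have hM0 : 0 ≤ M := le_trans (by positivity) (hb 0 ⟨le_refl 0, hT₁.le⟩)
  have hMabs : |M| = M := abs_of_nonneg hM0
  have hc' : Continuous (deriv h) := by
    have hh2 := hh
    rw [show (2 : WithTop ℕ∞) = 1 + 1 from rfl, contDiff_succ_iff_deriv] at hh2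
    exact hh2.2.2.continuous
  set φ : ℝ → ℝ := fun t : ℝ => (t ^ (H - 1 / 2) *
      ∫ s in (0:ℝ)..t,
        (t ^ (1 / 2 - H) * deriv h t - s ^ (1 / 2 - H) * deriv h s)
          * (t - s) ^ (-(H + 1 / 2))) ^ 2 with hφ
  -- pointwise bound
  have hφb : ∀ t ∈ Icc (0:ℝ) T₁, φ t ≤ K ^ 2 * t ^ (1 - 2*H) := by
    intro t htI
    rcases eq_or_lt_of_le htI.1 with h0 | h0
    · rw [hφ, ← h0]
      simp only [intervalIntegral.integral_same, mul_zero, ne_eq]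
      rw [Real.zero_rpow (show (1 - 2*H : ℝ) ≠ 0 by intro hc; linarith), mul_zero]
      norm_num
    · have hinner := inner_abs_bound hH₁ hH₂ hT₁ h hh hb ⟨h0, htI.2⟩
      have hrp : (0:ℝ) ≤ t ^ (H - 1/2) := Real.rpow_nonneg h0.le _
      have e1 : |t ^ (H - 1/2) *
          ∫ s in (0:ℝ)..t, (t ^ (1/2 - H) * deriv h t - s ^ (1/2 - H) * deriv h s)
            * (t - s) ^ (-(H + 1/2))| ≤ K * t ^ (1/2 - H) := by
        rw [abs_mul, abs_of_nonneg hrp]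
        calc t ^ (H - 1/2) * |∫ s in (0:ℝ)..t, (t ^ (1/2 - H) * deriv h t
              - s ^ (1/2 - H) * deriv h s) * (t - s) ^ (-(H + 1/2))|
            ≤ t ^ (H - 1/2) * (M * (4 / (1 - H) + 4 / (3/2 - H) * T₁) * t ^ (1 - 2*H)) :=
              mul_le_mul_of_nonneg_left hinner hrp
          _ = (M * (4 / (1 - H) + 4 / (3/2 - H) * T₁)) * (t ^ (H - 1/2) * t ^ (1 - 2*H)) := by
              ring
          _ = K * t ^ (1/2 - H) := by
              rw [← Real.rpow_add h0, hK, hMabs,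
                show (H - 1/2 + (1 - 2*H) : ℝ) = 1/2 - H by ring]
      calc φ t = |t ^ (H - 1/2) *
            ∫ s in (0:ℝ)..t, (t ^ (1/2 - H) * deriv h t - s ^ (1/2 - H) * deriv h s)
              * (t - s) ^ (-(H + 1/2))| ^ 2 := by rw [hφ, sq_abs]
        _ ≤ (K * t ^ (1/2 - H)) ^ 2 := by
            exact pow_le_pow_left₀ (abs_nonneg _) e1 2
        _ = K ^ 2 * t ^ (1 - 2*H) := by
            rw [mul_pow]
            congr 1
            rw [← Real.rpow_natCast (t ^ ((1:ℝ)/2 - H)) 2, ← Real.rpow_mul h0.le]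
            norm_num
            rw [show ((1/2 - H) * 2 : ℝ) = 1 - 2*H by ring]
  -- measurability of φ
  have hmeasφ : AEStronglyMeasurable φ (volume.restrict (Icc 0 T₁)) := by
    set F : ℝ × ℝ → ℝ := fun q => Set.indicator {q : ℝ × ℝ | q.2 ∈ Ioc 0 q.1}
      (fun q : ℝ × ℝ => (q.1 ^ (1/2 - H) * deriv h q.1 - q.2 ^ (1/2 - H) * deriv h q.2)
        * (q.1 - q.2) ^ (-(H + 1/2))) q with hF
    have hFmeas : Measurable F := by
      have m1 : Measurable fun q : ℝ × ℝ => q.1 ^ ((1:ℝ)/2 - H) := by fun_prop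
      have m2 : Measurable fun q : ℝ × ℝ => q.2 ^ ((1:ℝ)/2 - H) := by fun_prop
      have m3 : Measurable fun q : ℝ × ℝ => (q.1 - q.2) ^ (-(H + 1/2)) := by fun_prop
      have mset : MeasurableSet {q : ℝ × ℝ | q.2 ∈ Ioc 0 q.1} :=
        (measurableSet_lt measurable_const measurable_snd).inter
          (measurableSet_le measurable_snd measurable_fst)
      exact (((m1.mul (hc'.measurable.comp measurable_fst)).sub
        (m2.mul (hc'.measurable.comp measurable_snd))).mul m3).indicator mset
    have hΦ : StronglyMeasurable fun t : ℝ => ∫ s : ℝ, F (t, s) :=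
      hFmeas.stronglyMeasurable.integral_prod_right'
    have hψmeas : StronglyMeasurable fun t : ℝ => (t ^ (H - 1/2) * ∫ s : ℝ, F (t, s)) ^ 2 := by
      apply StronglyMeasurable.pow _ 2
      have mr : Measurable fun t : ℝ => t ^ (H - 1/2) := by fun_prop
      exact mr.stronglyMeasurable.mul hΦ
    refine hψmeas.aestronglyMeasurable.congr ?_
    rw [Filter.EventuallyEq, ae_restrict_iff' measurableSet_Icc]
    refine ae_of_all _ fun t htI => ?_
    have : (∫ s in (0:ℝ)..t, (t ^ (1/2 - H) * deriv h t - s ^ (1/2 - H) * deriv h s)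
        * (t - s) ^ (-(H + 1/2))) = ∫ s : ℝ, F (t, s) := by
      rw [intervalIntegral.integral_of_le htI.1,
        ← MeasureTheory.integral_indicator measurableSet_Ioc]
      rfl
    rw [hφ, ← this]
  -- integrability
  have hψint : IntegrableOn (fun t : ℝ => K ^ 2 * t ^ (1 - 2*H)) (Icc 0 T₁) :=
    ((integrableOn_Icc_iff_integrableOn_Ioc).mpr
      (rpow_integrableOn_Ioc (by linarith) 0 T₁)).const_mul _
  have hφint : IntegrableOn φ (Icc 0 T₁) := by
    refine Integrable.mono' hψint hmeasφ ?_
    rw [ae_restrict_iff' measurableSet_Icc]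
    refine ae_of_all _ fun t htI => ?_
    rw [Real.norm_eq_abs, abs_of_nonneg (by rw [hφ]; positivity)]
    exact hφb t htI
  refine ⟨hφint, ?_⟩
  calc ∫ t in Icc (0:ℝ) T₁, φ t ≤ ∫ t in Icc (0:ℝ) T₁, K ^ 2 * t ^ (1 - 2*H) :=
        setIntegral_mono_on hφint hψint measurableSet_Icc hφb
    _ = K ^ 2 * (T₁ ^ (2 - 2*H) / (2 - 2*H)) := by
        rw [MeasureTheory.integral_const_mul, MeasureTheory.integral_Icc_eq_integral_Ioc,
          ← intervalIntegral.integral_of_le hT₁.le,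
          integral_rpow (Or.inl (by linarith : (-1:ℝ) < 1 - 2*H)),
          Real.zero_rpow (by intro hc; linarith : (1 - 2*H + 1 : ℝ) ≠ 0),
          show (1 - 2*H + 1 : ℝ) = 2 - 2*H by ring]
        ring
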